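/- Let F be a division ring, V an algebraic conjugacy class with central minimal polynomial χ_V, and Δ = {γ₁,…,γ_m} ⊂ V a left P-basis of V (i.e., left P-independent with left minimal polynomial equal to χ_V). Then for any f ∈ F[z] and any γ ∈ V, f^ℓ(γ) = Σᵢ pᵢ^ℓ(γ)·pᵢ^ℓ(γᵢ)⁻¹·f^ℓ(γᵢ), where pᵢ is the left minimal polynomial of Δ∖{γᵢ}. -/
import Mathlib


open Polynomial

/-- Left evaluation of a polynomial `f = Σ zʲ fⱼ` at `a`: `f^ℓ(a) = Σ aʲ fⱼ`.
(Mathlib's `Polynomial.eval` is the right evaluation `Σ fⱼ aʲ`.) -/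
noncomputable def lEval {F : Type*} [DivisionRing F] (a : F) (f : F[X]) : F :=
  f.sum fun j c => a ^ j * c

/-- p is the left minimal polynomial of Δ: the monic generator of the right ideal
of polynomials left-vanishing on Δ. -/
def IsLeftMinPoly {F : Type*} [DivisionRing F] (Δ : Set F) (p : F[X]) : Prop :=
  p.Monic ∧ (∀ a ∈ Δ, lEval a p = 0) ∧
    ∀ f : F[X], (∀ a ∈ Δ, lEval a f = 0) → ∃ h : F[X], f = p * h

section Aux
variable {F : Type*} [DivisionRing F]

lemma lEval_zero (a : F) : lEval a (0 : F[X]) = 0 := by simp [lEval]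

lemma lEval_add (a : F) (f g : F[X]) : lEval a (f + g) = lEval a f + lEval a g := by
  unfold lEval
  exact Polynomial.sum_add_index f g _ (fun j => mul_zero _) (fun j b c => mul_add _ _ _)

lemma lEval_monomial (a : F) (n : ℕ) (b : F) : lEval a (monomial n b) = a ^ n * b := by
  unfold lEval
  rw [Polynomial.sum_monomial_index]
  exact mul_zero _

lemma lEval_sub (a : F) (f g : F[X]) : lEval a (f - g) = lEval a f - lEval a g := by
  have h := lEval_add a (f - g) g
  rw [sub_add_cancel] at h
  exact eq_sub_of_add_eq h.symm

lemma lEval_finset_sum {ι : Type*} (s : Finset ι) (a : F) (g : ι → F[X]) :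
    lEval a (∑ i ∈ s, g i) = ∑ i ∈ s, lEval a (g i) := by
  induction s using Finset.cons_induction with
  | empty => simp [lEval_zero]
  | cons i s hi ih => rw [Finset.sum_cons, Finset.sum_cons, lEval_add, ih]

lemma lEval_mul_C (a : F) (f : F[X]) (c : F) : lEval a (f * C c) = lEval a f * c := by
  induction f using Polynomial.induction_on' with
  | add p q hp hq => rw [add_mul, lEval_add, lEval_add, hp, hq, add_mul]
  | monomial n b => rw [monomial_mul_C, lEval_monomial, lEval_monomial, mul_assoc]

lemma lEval_mul_X_pow (a : F) (f : F[X]) (n : ℕ) :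
    lEval a (f * X ^ n) = a ^ n * lEval a f := by
  induction f using Polynomial.induction_on' with
  | add p q hp hq => rw [add_mul, lEval_add, hp, hq, lEval_add, mul_add]
  | monomial m b =>
      rw [monomial_mul_X_pow, lEval_monomial, lEval_monomial, ← mul_assoc, ← pow_add,
        Nat.add_comm]

lemma lEval_eq_eval_of_central (x : F) (χ : F[X]) (hcen : ∀ n, χ.coeff n ∈ Subring.center F) :
    lEval x χ = χ.eval x := by
  rw [Polynomial.eval_eq_sum]
  unfold lEval Polynomial.sum
  exact Finset.sum_congr rfl fun n _ => Subring.mem_center_iff.mp (hcen n) (x ^ n)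

lemma lEval_central_mul (x : F) (χ : F[X]) (hcen : ∀ n, χ.coeff n ∈ Subring.center F)
    (hx : χ.eval x = 0) (h : F[X]) : lEval x (χ * h) = 0 := by
  induction h using Polynomial.induction_on' with
  | add p q hp hq => rw [mul_add, lEval_add, hp, hq, add_zero]
  | monomial n b =>
      have : χ * monomial n b = (χ * C b) * X ^ n := by
        rw [mul_assoc, C_mul_X_pow_eq_monomial]
      rw [this, lEval_mul_X_pow, lEval_mul_C, lEval_eq_eval_of_central x χ hcen, hx,
        zero_mul, mul_zero]

end Aux

/-- Left extension formula: if Δ = {γ₁,…,γ_m} is a left P-basis of the algebraic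
conjugacy class V (its left minimal polynomial is the central minimal polynomial
χ_V of V), then f^ℓ(γ) = Σᵢ pᵢ^ℓ(γ)·pᵢ^ℓ(γᵢ)⁻¹·f^ℓ(γᵢ) for every γ ∈ V. -/
theorem stmt18 {F : Type*} [DivisionRing F] (a : F) (m : ℕ) (γ : Fin m → F)
    (hγinj : Function.Injective γ)
    (hγV : ∀ i, ∃ h : F, h ≠ 0 ∧ γ i = h * a * h⁻¹)
    (χ : F[X]) (hmonic : χ.Monic) (hcen : ∀ n, χ.coeff n ∈ Subring.center F)
    (hzero : ∀ x : F, (∃ h : F, h ≠ 0 ∧ x = h * a * h⁻¹) → χ.eval x = 0)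
    (hmin : ∀ g : F[X], g.Monic → (∀ n, g.coeff n ∈ Subring.center F) →
      g.eval a = 0 → χ.degree ≤ g.degree)
    (hbasis : IsLeftMinPoly (Set.range γ) χ)
    (p : Fin m → F[X])
    (hp : ∀ i, IsLeftMinPoly {x | ∃ j, j ≠ i ∧ x = γ j} (p i))
    (hne : ∀ i, lEval (γ i) (p i) ≠ 0)
    (f : F[X]) (x : F) (hx : ∃ h : F, h ≠ 0 ∧ x = h * a * h⁻¹) :
    lEval x f = ∑ i, lEval x (p i) * (lEval (γ i) (p i))⁻¹ * lEval (γ i) f := by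
  set c : Fin m → F := fun i => (lEval (γ i) (p i))⁻¹ * lEval (γ i) f with hc
  set g : F[X] := f - ∑ i, p i * C (c i) with hg
  -- g left-vanishes on each γ j
  have hvan : ∀ y ∈ Set.range γ, lEval y g = 0 := by
    rintro y ⟨j, rfl⟩
    rw [hg, lEval_sub, lEval_finset_sum]
    have hterm : ∀ i, lEval (γ j) (p i * C (c i)) = lEval (γ j) (p i) * c i :=
      fun i => lEval_mul_C _ _ _
    rw [Finset.sum_congr rfl fun i _ => hterm i,
      Finset.sum_eq_single j
        (fun i _ hij => by
          have h0 : lEval (γ j) (p i) = 0 :=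
            (hp i).2.1 (γ j) ⟨j, fun hji => hij (by simpa using hji.symm ▸ rfl), rfl⟩
          rw [h0, zero_mul])
        (fun hj => absurd (Finset.mem_univ j) hj)]
    rw [hc]
    rw [← mul_assoc, mul_inv_cancel₀ (hne j), one_mul, sub_self]
  obtain ⟨h, hh⟩ := hbasis.2.2 g hvan
  have hxg : lEval x g = 0 := by
    rw [hh]; exact lEval_central_mul x χ hcen (hzero x hx) h
  rw [hg, lEval_sub, sub_eq_zero] at hxg
  rw [hxg, lEval_finset_sum]
  refine Finset.sum_congr rfl fun i _ => ?_
  rw [lEval_mul_C, hc, mul_assoc]
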